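/- Let n ≥ 1, let μ be a real number with μ ≠ 2, and let Λ, T be n×n unitary matrices satisfying the DMSA equations with spectrum {μ}. Assume the representation is irreducible, i.e., the only subspaces of ℂⁿ invariant under both Λ and T are 0 and ℂⁿ. Then there exist a complex number q with qⁿ = 1, real numbers θ, θ′, and an n×n unitary matrix U such that UΛU† = e^{iθ}·g_q and UTU† = e^{iθ′}·h_n, where g_q is the diagonal matrix with (g_q)_{kk} = q^{k−1} and h_n is the cyclic shift matrix with (h_n)_{k,k+1} = 1 for 1 ≤ k ≤ n−1, (h_n)_{n,1} = 1, and all other entries zero; moreover μ = |1−q|², i.e., μ = 4sin²β for some β ∈ ℝ with q = e^{2iβ} and e^{2inβ} = 1. -/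

import Mathlib

open scoped Matrix BigOperators

/-- The commutator `[A,B] = AB − BA` of square matrices. -/
noncomputable def matComm {n : ℕ} (A B : Matrix (Fin n) (Fin n) ℂ) : Matrix (Fin n) (Fin n) ℂ :=
  A * B - B * A

/-- The clock matrix `g_q` with `(g_q)_{kk} = q^{k-1}` (indices `k = 1, …, n`). -/
noncomputable def clock (n : ℕ) (q : ℂ) : Matrix (Fin n) (Fin n) ℂ :=
  Matrix.diagonal fun k => q ^ (k : ℕ)

/-- The cyclic shift matrix `h_n` with `(h_n)_{k,k+1} = 1` for `1 ≤ k ≤ n−1`,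
`(h_n)_{n,1} = 1`, and all other entries zero. -/
noncomputable def shift (n : ℕ) : Matrix (Fin n) (Fin n) ℂ :=
  Matrix.of fun k l => if (l : ℕ) = ((k : ℕ) + 1) % n then 1 else 0

section Aux


lemma schur_aux {n : ℕ} (hn : 0 < n) (Λ T M : Matrix (Fin n) (Fin n) ℂ)
    (hirr : ∀ W : Submodule ℂ (Fin n → ℂ),
      (∀ v ∈ W, Λ.mulVec v ∈ W) → (∀ v ∈ W, T.mulVec v ∈ W) → W = ⊥ ∨ W = ⊤)
    (hMΛ : M * Λ = Λ * M) (hMT : M * T = T * M) :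
    ∃ β : ℂ, M = β • (1 : Matrix (Fin n) (Fin n) ℂ) := by
  haveI : Nonempty (Fin n) := ⟨⟨0, hn⟩⟩
  obtain ⟨β, hβ⟩ := Module.End.exists_eigenvalue M.mulVecLin
  refine ⟨β, ?_⟩
  set W := Module.End.eigenspace M.mulVecLin β with hW
  have hmem : ∀ v, v ∈ W ↔ M.mulVec v = β • v := by
    intro v
    rw [hW, Module.End.mem_eigenspace_iff]
    rfl
  have hinv : ∀ A : Matrix (Fin n) (Fin n) ℂ, M * A = A * M → ∀ v ∈ W, A.mulVec v ∈ W := by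
    intro A hA v hv
    rw [hmem] at hv ⊢
    rw [Matrix.mulVec_mulVec, hA, ← Matrix.mulVec_mulVec, hv, Matrix.mulVec_smul]
  rcases hirr W (hinv Λ hMΛ) (hinv T hMT) with h | h
  · exact absurd h hβ
  · have hall : ∀ v, M.mulVec v = β • v := fun v => (hmem v).mp (h ▸ trivial)
    ext i j
    have := congrFun (hall (Pi.single j 1)) i
    simp only [Matrix.mulVec_single_one, Matrix.col_apply] at this
    simp [this, Matrix.one_apply, Pi.single_apply, mul_comm]

lemma span_top_le {n m : ℕ} (e : Fin m → (Fin n → ℂ))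
    (h : Submodule.span ℂ (Set.range e) = ⊤) : n ≤ m := by
  have h1 := finrank_le_of_span_eq_top h
  simpa using h1

lemma span_invariant {n : ℕ} (A : Matrix (Fin n) (Fin n) ℂ) (s : Set (Fin n → ℂ))
    (h : ∀ x ∈ s, A.mulVec x ∈ Submodule.span ℂ s) :
    ∀ v ∈ Submodule.span ℂ s, A.mulVec v ∈ Submodule.span ℂ s := by
  intro v hv
  induction hv using Submodule.span_induction with
  | mem x hx => exact h x hx
  | zero => simp [Matrix.mulVec_zero]
  | add x y _ _ hx hy => rw [Matrix.mulVec_add]; exact Submodule.add_mem _ hx hy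
  | smul c x _ hx => rw [Matrix.mulVec_smul]; exact Submodule.smul_mem _ c hx

lemma comm_pow {n : ℕ} (Λ T : Matrix (Fin n) (Fin n) ℂ) (ω : ℂ)
    (hcomm : Λ * T = ω • (T * Λ)) (k : ℕ) : Λ * T ^ k = ω ^ k • (T ^ k * Λ) := by
  induction k with
  | zero => simp
  | succ k ih =>
    calc Λ * T ^ (k + 1) = Λ * T ^ k * T := by rw [pow_succ, mul_assoc]
      _ = ω ^ k • (T ^ k * Λ * T) := by rw [ih, Matrix.smul_mul]
      _ = ω ^ k • (T ^ k * (ω • (T * Λ))) := by rw [mul_assoc, hcomm]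
      _ = ω ^ (k + 1) • (T ^ (k + 1) * Λ) := by
          rw [Matrix.mul_smul, smul_smul, mul_comm (ω ^ k) ω]
          congr 1
          · rw [pow_succ, mul_comm]
          · rw [← mul_assoc, ← pow_succ]

lemma pow_unit {n : ℕ} (T : Matrix (Fin n) (Fin n) ℂ) (hT2 : Tᴴ * T = 1) (k : ℕ) :
    (T ^ k)ᴴ * T ^ k = 1 := by
  induction k with
  | zero => simp
  | succ k ih =>
    rw [pow_succ', Matrix.conjTranspose_mul]
    calc (T ^ k)ᴴ * Tᴴ * (T * T ^ k) = (T ^ k)ᴴ * (Tᴴ * T) * T ^ k := by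
          rw [mul_assoc, mul_assoc, mul_assoc]
      _ = 1 := by rw [hT2, mul_one, ih]

lemma reduce_dmsa {n : ℕ} (μ : ℝ) (A B : Matrix (Fin n) (Fin n) ℂ)
    (hA1 : A * Aᴴ = 1) (hA2 : Aᴴ * A = 1) (hB1 : B * Bᴴ = 1) (hB2 : Bᴴ * B = 1)
    (h : (2 * (μ : ℂ)) • B =
      matComm (matComm B Bᴴ) B + matComm (matComm B A) Aᴴ + matComm (matComm B Aᴴ) A) :
    A * (B * Aᴴ) + Aᴴ * (B * A) = ((2 : ℂ) - μ) • B := by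
  have e1 : ∀ M : Matrix (Fin n) (Fin n) ℂ, A * (Aᴴ * M) = M := fun M => by
    rw [← mul_assoc, hA1, one_mul]
  have e2 : ∀ M : Matrix (Fin n) (Fin n) ℂ, Aᴴ * (A * M) = M := fun M => by
    rw [← mul_assoc, hA2, one_mul]
  have e3 : ∀ M : Matrix (Fin n) (Fin n) ℂ, B * (Bᴴ * M) = M := fun M => by
    rw [← mul_assoc, hB1, one_mul]
  have e4 : ∀ M : Matrix (Fin n) (Fin n) ℂ, Bᴴ * (B * M) = M := fun M => by
    rw [← mul_assoc, hB2, one_mul]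
  simp only [matComm, sub_mul, mul_sub, mul_assoc, e1, e2, e3, e4, mul_one, one_mul,
    hA1, hA2, hB1, hB2] at h
  linear_combination (norm := module) ((1 : ℂ) / 2) • h

lemma ip_pres {n : ℕ} (A : Matrix (Fin n) (Fin n) ℂ) (hA : Aᴴ * A = 1) (x y : Fin n → ℂ) :
    star (A.mulVec x) ⬝ᵥ (A.mulVec y) = star x ⬝ᵥ y := by
  rw [Matrix.star_mulVec, Matrix.dotProduct_mulVec, Matrix.vecMul_vecMul, hA,
    Matrix.vecMul_one]

lemma conj_entry {n : ℕ} (A : Matrix (Fin n) (Fin n) ℂ) (f : Fin n → Fin n → ℂ)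
    (k l : Fin n) :
    ((Matrix.of fun k j => (starRingEnd ℂ) (f k j)) * A *
      (Matrix.of fun k j => (starRingEnd ℂ) (f k j))ᴴ) k l = star (f k) ⬝ᵥ (A.mulVec (f l)) := by
  simp only [Matrix.mul_apply, Matrix.conjTranspose_apply, Matrix.of_apply,
    Matrix.mulVec, dotProduct, Pi.star_apply, RingHom.id_apply, star_star,
    Finset.sum_mul, Finset.mul_sum]
  rw [Finset.sum_comm]
  apply Finset.sum_congr rfl; intro a _
  apply Finset.sum_congr rfl; intro b _
  simp only [Complex.star_def, Complex.conj_conj]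
  ring

lemma exp_form {z : ℂ} (h : (starRingEnd ℂ) z * z = 1) : ∃ θ : ℝ, Complex.exp (θ * Complex.I) = z := by
  rw [← Complex.norm_eq_one_iff]
  have h2 : (Complex.normSq z : ℂ) = 1 := by rw [Complex.normSq_eq_conj_mul_self]; exact h
  have h3 : Complex.normSq z = 1 := by exact_mod_cast h2
  rw [Complex.norm_def, h3, Real.sqrt_one]

lemma construction {n : ℕ} (hn : 0 < n) (Λ T : Matrix (Fin n) (Fin n) ℂ)
    (hΛ2 : Λᴴ * Λ = 1) (hT2 : Tᴴ * T = 1)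
    (ω : ℂ) (hωu : (starRingEnd ℂ) ω * ω = 1)
    (hcomm : Λ * T = ω • (T * Λ))
    (hprim : ∀ m : ℕ, 0 < m → m < n → ω ^ m ≠ 1)
    (lam : ℂ) (hlamu : (starRingEnd ℂ) lam * lam = 1)
    (v : Fin n → ℂ) (hvn : star v ⬝ᵥ v = 1)
    (hve : Λ.mulVec v = lam • v)
    (β : ℂ) (hβu : (starRingEnd ℂ) β * β = 1) (hTn : T ^ n = β • 1) :
    ∃ (θ θ' : ℝ) (U : Matrix (Fin n) (Fin n) ℂ), U ∈ Matrix.unitaryGroup (Fin n) ℂ ∧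
      U * Λ * Uᴴ = Complex.exp (Complex.I * θ) • clock n ω⁻¹ ∧
      U * T * Uᴴ = Complex.exp (Complex.I * θ') • shift n := by
  have hω0 : ω ≠ 0 := by rintro rfl; simp at hωu
  have hlam0 : lam ≠ 0 := by rintro rfl; simp at hlamu
  have hβ0 : β ≠ 0 := by rintro rfl; simp at hβu
  have hωconj : (starRingEnd ℂ) ω = ω⁻¹ := eq_inv_of_mul_eq_one_left hωu
  -- commutation with powers of T
  have hcp : ∀ k : ℕ, Λ * T ^ k = ω ^ k • (T ^ k * Λ) := by
    intro k
    induction k with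
    | zero => simp
    | succ k ih =>
      calc Λ * T ^ (k + 1) = Λ * T ^ k * T := by rw [pow_succ, mul_assoc]
        _ = ω ^ k • (T ^ k * Λ * T) := by rw [ih, Matrix.smul_mul]
        _ = ω ^ k • (T ^ k * (ω • (T * Λ))) := by rw [mul_assoc, hcomm]
        _ = ω ^ (k + 1) • (T ^ (k + 1) * Λ) := by
            rw [Matrix.mul_smul, smul_smul, mul_comm (ω ^ k) ω]
            congr 1
            · rw [pow_succ, mul_comm]
            · rw [← mul_assoc, ← pow_succ]
  -- the vectors e k
  set e : ℕ → Fin n → ℂ := fun k => (T ^ k).mulVec v with he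
  have he0 : e 0 = v := by simp [he]
  have heS : ∀ k, e (k + 1) = T.mulVec (e k) := by
    intro k
    rw [he]
    simp only []
    rw [pow_succ', ← Matrix.mulVec_mulVec]
  have hΛe : ∀ k : ℕ, Λ.mulVec (e k) = (lam * ω ^ k) • e k := by
    intro k
    rw [he]
    simp only []
    rw [Matrix.mulVec_mulVec, hcp k, Matrix.smul_mulVec, ← Matrix.mulVec_mulVec, hve,
      Matrix.mulVec_smul, smul_smul, mul_comm (ω ^ k) lam]
  -- powers of T are unitary
  have hTk : ∀ k : ℕ, (T ^ k)ᴴ * T ^ k = 1 := by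
    intro k
    induction k with
    | zero => simp
    | succ k ih =>
      rw [pow_succ', Matrix.conjTranspose_mul]
      calc (T ^ k)ᴴ * Tᴴ * (T * T ^ k) = (T ^ k)ᴴ * (Tᴴ * T) * T ^ k := by
            rw [mul_assoc, mul_assoc, mul_assoc]
        _ = 1 := by rw [hT2, mul_one, ih]
  have hen : ∀ k : ℕ, star (e k) ⬝ᵥ e k = 1 := by
    intro k
    rw [he]
    simp only []
    rw [ip_pres _ (hTk k), hvn]
  -- distinct powers of ω
  have hωpow : ∀ j k : ℕ, j < n → k < n → j ≠ k → ω ^ j ≠ ω ^ k := by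
    have key : ∀ j k : ℕ, k < n → j < k → ω ^ j = ω ^ k → False := by
      intro j k hk hjk heq
      have h2 : ω ^ j * ω ^ (k - j) = ω ^ j * 1 := by
        rw [← pow_add, show j + (k - j) = k from by omega, heq, mul_one]
      exact hprim (k - j) (by omega) (by omega)
        (mul_left_cancel₀ (pow_ne_zero j hω0) h2)
    intro j k hj hk hjk heq
    rcases Nat.lt_or_ge j k with h | h
    · exact key j k hk h heq
    · exact key k j hj (by omega) heq.symm
  -- orthogonality
  have horth : ∀ j k : ℕ, j < n → k < n → j ≠ k → star (e j) ⬝ᵥ e k = 0 := by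
    intro j k hj hk hjk
    have h := ip_pres Λ hΛ2 (e j) (e k)
    rw [hΛe j, hΛe k, dotProduct_smul, star_smul, smul_dotProduct] at h
    simp only [smul_eq_mul, Complex.star_def, map_mul, map_pow] at h
    have h' : ((starRingEnd ℂ) ω ^ j * ω ^ k) * (star (e j) ⬝ᵥ e k) = star (e j) ⬝ᵥ e k := by
      linear_combination h + (-((starRingEnd ℂ) ω ^ j * ω ^ k * (star (e j) ⬝ᵥ e k))) * hlamu
    by_contra hip
    have h3 : (starRingEnd ℂ) ω ^ j * ω ^ k = 1 := by
      have hz : ((starRingEnd ℂ) ω ^ j * ω ^ k - 1) * (star (e j) ⬝ᵥ e k) = 0 := by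
        linear_combination h'
      rcases mul_eq_zero.mp hz with hz | hz
      · exact sub_eq_zero.mp hz
      · exact absurd hz hip
    have h5 : (starRingEnd ℂ) ω ^ j * ω ^ j = 1 := by rw [← mul_pow, hωu, one_pow]
    have h6 : (starRingEnd ℂ) ω ^ j ≠ 0 := by
      intro hz
      rw [hz, zero_mul] at h5
      exact zero_ne_one h5
    exact hωpow j k hj hk hjk (mul_left_cancel₀ h6 (h5.trans h3.symm))
  have ipee : ∀ j m : ℕ, j < n → m < n → star (e j) ⬝ᵥ e m = if j = m then 1 else 0 := by
    intro j m hj hm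
    by_cases h : j = m
    · subst h
      rw [if_pos rfl, hen]
    · rw [if_neg h, horth j m hj hm h]
  -- root γ of β
  obtain ⟨ψ, hψ⟩ := exp_form hβu
  set γ : ℂ := Complex.exp ((ψ / n) * Complex.I) with hγ
  have hγn : γ ^ n = β := by
    rw [hγ, ← Complex.exp_nat_mul, ← hψ]
    congr 1
    have hn0 : (n : ℂ) ≠ 0 := by exact_mod_cast hn.ne'
    field_simp
  have hγu : (starRingEnd ℂ) γ * γ = 1 := by
    rw [hγ, ← Complex.exp_conj, ← Complex.exp_add, ← Complex.exp_zero]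
    congr 1
    simp only [map_mul, map_div₀, Complex.conj_ofReal, Complex.conj_natCast, Complex.conj_I]
    ring
  have hγ0 : γ ≠ 0 := Complex.exp_ne_zero _
  have hγconj : (starRingEnd ℂ) γ = γ⁻¹ := eq_inv_of_mul_eq_one_left hγu
  -- the orthonormal family f
  set f : Fin n → Fin n → ℂ := fun k => γ ^ (k : ℕ) • e (n - 1 - (k : ℕ)) with hf
  have ipff : ∀ k l : Fin n, star (f k) ⬝ᵥ f l = if k = l then 1 else 0 := by
    intro k l
    have hk := k.isLt
    have hl := l.isLt
    rw [hf]
    simp only []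
    rw [star_smul, smul_dotProduct, dotProduct_smul, smul_eq_mul, smul_eq_mul,
      ipee _ _ (by omega) (by omega)]
    by_cases h : k = l
    · subst h
      rw [if_pos rfl, if_pos rfl, mul_one, Complex.star_def, map_pow, ← mul_pow,
        hγu, one_pow]
    · have hne : (k : ℕ) ≠ (l : ℕ) := fun hh => h (Fin.ext hh)
      rw [if_neg (by omega), if_neg h, mul_zero, mul_zero]
  -- the unitary U
  set U : Matrix (Fin n) (Fin n) ℂ := Matrix.of (fun k j => (starRingEnd ℂ) (f k j)) with hU
  have hUmem : U ∈ Matrix.unitaryGroup (Fin n) ℂ := by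
    rw [Matrix.mem_unitaryGroup_iff, Matrix.star_eq_conjTranspose]
    ext k l
    rw [Matrix.mul_apply, Matrix.one_apply]
    calc ∑ j, U k j * Uᴴ j l = ∑ j, star (f k) j * f l j := by
          apply Finset.sum_congr rfl
          intro j _
          rw [hU]
          simp only [Matrix.conjTranspose_apply, Matrix.of_apply, Pi.star_apply,
            Complex.star_def, Complex.conj_conj]
      _ = star (f k) ⬝ᵥ f l := rfl
      _ = if k = l then 1 else 0 := ipff k l
  -- conjugating Λ
  have hΛf : ∀ l : Fin n, Λ.mulVec (f l) = (lam * ω ^ (n - 1 - (l : ℕ))) • f l := by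
    intro l
    rw [hf]
    simp only []
    rw [Matrix.mulVec_smul, hΛe, smul_comm]
  have hUΛ : U * Λ * Uᴴ = (lam * ω ^ (n - 1)) • clock n ω⁻¹ := by
    ext k l
    have hk := k.isLt
    rw [hU, conj_entry, hΛf l, dotProduct_smul, smul_eq_mul, ipff,
      Matrix.smul_apply, clock, Matrix.diagonal_apply, smul_eq_mul]
    by_cases h : k = l
    · subst h
      rw [if_pos rfl, if_pos rfl, mul_one]
      have hsplit : ω ^ (k : ℕ) * ω ^ (n - 1 - (k : ℕ)) = ω ^ (n - 1) := by
        rw [← pow_add, show (k : ℕ) + (n - 1 - (k : ℕ)) = n - 1 from by omega]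
      have h2 : ω ^ (n - 1 - (k : ℕ)) = ω ^ (n - 1) * (ω⁻¹) ^ (k : ℕ) := by
        rw [inv_pow, eq_comm, mul_inv_eq_iff_eq_mul₀ (pow_ne_zero _ hω0), eq_comm, mul_comm]
        exact hsplit
      rw [h2]
      ring
    · rw [if_neg h, if_neg h, mul_zero, mul_zero]
  have hdu : (starRingEnd ℂ) (lam * ω ^ (n - 1)) * (lam * ω ^ (n - 1)) = 1 := by
    rw [map_mul, map_pow]
    calc (starRingEnd ℂ) lam * (starRingEnd ℂ) ω ^ (n - 1) * (lam * ω ^ (n - 1))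
        = ((starRingEnd ℂ) lam * lam) * ((starRingEnd ℂ) ω * ω) ^ (n - 1) := by
          rw [mul_pow]; ring
      _ = 1 := by rw [hlamu, hωu, one_pow, mul_one]
  obtain ⟨θ, hθ⟩ := exp_form hdu
  -- conjugating T
  have hUT : U * T * Uᴴ = γ • shift n := by
    ext k l
    have hk := k.isLt
    have hl := l.isLt
    rw [hU, conj_entry, shift, Matrix.smul_apply, Matrix.of_apply, smul_eq_mul]
    by_cases h0 : (l : ℕ) = 0
    · have hTfl : T.mulVec (f l) = β • e 0 := by
        rw [hf]
        simp only []
        rw [h0, pow_zero, one_smul, Nat.sub_zero, ← heS,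
          show n - 1 + 1 = n from by omega, he]
        simp only []
        rw [hTn, Matrix.smul_mulVec, Matrix.one_mulVec, pow_zero, Matrix.one_mulVec]
      rw [hTfl, dotProduct_smul, smul_eq_mul, hf]
      simp only []
      rw [star_smul, smul_dotProduct, smul_eq_mul,
        ipee _ _ (by omega) (by omega)]
      by_cases hk1 : (k : ℕ) = n - 1
      · have hmod : ((k : ℕ) + 1) % n = 0 := by
          rw [show (k : ℕ) + 1 = n from by omega]
          exact Nat.mod_self n
        rw [if_pos (by omega), if_pos (by omega), mul_one]
        rw [Complex.star_def, map_pow, hγconj, hk1, inv_pow]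
        have hsp : γ ^ n = γ ^ (n - 1) * γ := by
          rw [← pow_succ, show n - 1 + 1 = n from by omega]
        rw [← hγn, hsp]
        field_simp
      · have hmod : ((k : ℕ) + 1) % n = (k : ℕ) + 1 := Nat.mod_eq_of_lt (by omega)
        rw [if_neg (by omega), if_neg (by omega), mul_zero, mul_zero, mul_zero]
    · have hTfl : T.mulVec (f l) = γ ^ (l : ℕ) • e (n - 1 - ((l : ℕ) - 1)) := by
        rw [hf]
        simp only []
        rw [Matrix.mulVec_smul, ← heS,
          show n - 1 - (l : ℕ) + 1 = n - 1 - ((l : ℕ) - 1) from by omega]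
      rw [hTfl, dotProduct_smul, smul_eq_mul, hf]
      simp only []
      rw [star_smul, smul_dotProduct, smul_eq_mul,
        ipee _ _ (by omega) (by omega)]
      by_cases hkl : (k : ℕ) = (l : ℕ) - 1
      · have hmod : ((k : ℕ) + 1) % n = (k : ℕ) + 1 := Nat.mod_eq_of_lt (by omega)
        rw [if_pos (by omega), if_pos (by omega), mul_one]
        rw [Complex.star_def, map_pow, hγconj, hkl, inv_pow]
        have hsp : γ ^ (l : ℕ) = γ ^ ((l : ℕ) - 1) * γ := by
          rw [← pow_succ, show (l : ℕ) - 1 + 1 = (l : ℕ) from by omega]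
        rw [hsp]
        field_simp
      · rcases Nat.lt_or_ge ((k : ℕ) + 1) n with hmd | hmd
        · have hmod : ((k : ℕ) + 1) % n = (k : ℕ) + 1 := Nat.mod_eq_of_lt hmd
          rw [if_neg (by omega), if_neg (by omega), mul_zero, mul_zero, mul_zero]
        · have hmod : ((k : ℕ) + 1) % n = 0 := by
            rw [show (k : ℕ) + 1 = n from by omega]
            exact Nat.mod_self n
          rw [if_neg (by omega), if_neg (by omega), mul_zero, mul_zero, mul_zero]
  obtain ⟨θ', hθ'⟩ := exp_form hγu
  refine ⟨θ, θ', U, hUmem, ?_, ?_⟩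
  · rw [hUΛ, mul_comm Complex.I (θ : ℂ), hθ]
  · rw [hUT, mul_comm Complex.I (θ' : ℂ), hθ']

end Aux

/-- Every irreducible unitary representation of `U₄(A)` with `Spec(A) = {μ}`, `μ ≠ 2`,
is (up to unitary equivalence and phases) the fuzzy torus representation:
`UΛU† = e^{iθ} g_q`, `UTU† = e^{iθ′} h_n` with `qⁿ = 1`; moreover
`μ = |1−q|² = 4 sin² β` with `q = e^{2iβ}` and `e^{2inβ} = 1`. -/
theorem irreducible_unitary_rep_is_fuzzy_torus (n : ℕ) (hn : 0 < n)
    (μ : ℝ) (hμ : μ ≠ 2)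
    (Λ T : Matrix (Fin n) (Fin n) ℂ)
    (hΛ : Λ ∈ Matrix.unitaryGroup (Fin n) ℂ) (hT : T ∈ Matrix.unitaryGroup (Fin n) ℂ)
    (h1 : (2 * (μ : ℂ)) • Λ =
      matComm (matComm Λ Λᴴ) Λ + matComm (matComm Λ T) Tᴴ + matComm (matComm Λ Tᴴ) T)
    (h2 : (2 * (μ : ℂ)) • T =
      matComm (matComm T Tᴴ) T + matComm (matComm T Λ) Λᴴ + matComm (matComm T Λᴴ) Λ)
    (hirr : ∀ W : Submodule ℂ (Fin n → ℂ),
      (∀ v ∈ W, Λ.mulVec v ∈ W) → (∀ v ∈ W, T.mulVec v ∈ W) → W = ⊥ ∨ W = ⊤) :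
    ∃ q : ℂ, q ^ n = 1 ∧
      (∃ (θ θ' : ℝ) (U : Matrix (Fin n) (Fin n) ℂ), U ∈ Matrix.unitaryGroup (Fin n) ℂ ∧
        U * Λ * Uᴴ = Complex.exp (Complex.I * (θ : ℂ)) • clock n q ∧
        U * T * Uᴴ = Complex.exp (Complex.I * (θ' : ℂ)) • shift n) ∧
      μ = ‖1 - q‖ ^ 2 ∧
      (∃ β : ℝ, μ = 4 * Real.sin β ^ 2 ∧ q = Complex.exp (2 * (β : ℂ) * Complex.I) ∧
        Complex.exp (2 * (n : ℂ) * (β : ℂ) * Complex.I) = 1) := by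
  haveI : Nonempty (Fin n) := ⟨⟨0, hn⟩⟩
  have z0 : Fin n := ⟨0, hn⟩
  -- unitarity
  have hΛ1 : Λ * Λᴴ = 1 := by
    rw [← Matrix.star_eq_conjTranspose]; exact Matrix.mem_unitaryGroup_iff.mp hΛ
  have hΛ2 : Λᴴ * Λ = 1 := by
    rw [← Matrix.star_eq_conjTranspose]; exact Matrix.mem_unitaryGroup_iff'.mp hΛ
  have hT1 : T * Tᴴ = 1 := by
    rw [← Matrix.star_eq_conjTranspose]; exact Matrix.mem_unitaryGroup_iff.mp hT
  have hT2 : Tᴴ * T = 1 := by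
    rw [← Matrix.star_eq_conjTranspose]; exact Matrix.mem_unitaryGroup_iff'.mp hT
  set c : ℂ := (2 : ℂ) - μ with hcdef
  have hc0 : c ≠ 0 := by
    rw [hcdef, sub_ne_zero]
    intro h
    exact hμ (by exact_mod_cast h.symm)
  have key : Λ * (T * Λᴴ) + Λᴴ * (T * Λ) = c • T := reduce_dmsa μ Λ T hΛ1 hΛ2 hT1 hT2 h2
  have key2 : T * (Λ * Tᴴ) + Tᴴ * (Λ * T) = c • Λ := reduce_dmsa μ T Λ hT1 hT2 hΛ1 hΛ2 h1
  -- collapse helpers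
  have e1 : ∀ M : Matrix (Fin n) (Fin n) ℂ, Λ * (Λᴴ * M) = M := fun M => by
    rw [← mul_assoc, hΛ1, one_mul]
  have e2 : ∀ M : Matrix (Fin n) (Fin n) ℂ, Λᴴ * (Λ * M) = M := fun M => by
    rw [← mul_assoc, hΛ2, one_mul]
  have e3 : ∀ M : Matrix (Fin n) (Fin n) ℂ, T * (Tᴴ * M) = M := fun M => by
    rw [← mul_assoc, hT1, one_mul]
  have e4 : ∀ M : Matrix (Fin n) (Fin n) ℂ, Tᴴ * (T * M) = M := fun M => by
    rw [← mul_assoc, hT2, one_mul]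
  -- the unitary X = Λ T Λᴴ Tᴴ
  set X : Matrix (Fin n) (Fin n) ℂ := Λ * (T * (Λᴴ * Tᴴ)) with hXdef
  have h1' : X + Λᴴ * (T * (Λ * Tᴴ)) = c • 1 := by
    have := congrArg (fun M => M * Tᴴ) key
    simp only [add_mul, Matrix.smul_mul, mul_assoc, e1, e2, e3, e4, hT1, hT2] at this
    simpa [hXdef, mul_assoc] using this
  have h2' : Xᴴ + Tᴴ * (Λ * (T * Λᴴ)) = c • 1 := by
    have := congrArg (fun M => M * Λᴴ) key2
    simp only [add_mul, Matrix.smul_mul, mul_assoc, e1, e2, e3, e4, hΛ1, hΛ2] at this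
    simpa [hXdef, Matrix.conjTranspose_mul, mul_assoc] using this
  have hXX : Xᴴ * X = 1 := by
    simp [hXdef, Matrix.conjTranspose_mul, mul_assoc, e1, e2, e3, e4, hΛ1, hΛ2, hT1, hT2]
  have hYY : (Λᴴ * (T * (Λ * Tᴴ)))ᴴ * (Λᴴ * (T * (Λ * Tᴴ))) = 1 := by
    simp [Matrix.conjTranspose_mul, mul_assoc, e1, e2, e3, e4, hΛ1, hΛ2, hT1, hT2]
  have hcr : star c = c := by
    rw [hcdef]
    simp [Complex.star_def, map_sub, Complex.conj_ofReal, map_ofNat]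
  have hXH : X + Xᴴ = c • 1 := by
    have hY : Λᴴ * (T * (Λ * Tᴴ)) = c • 1 - X := eq_sub_of_add_eq' h1'
    rw [hY] at hYY
    have expand : (c • (1 : Matrix (Fin n) (Fin n) ℂ) - X)ᴴ * (c • 1 - X)
        = (c * c) • 1 - c • X - c • Xᴴ + Xᴴ * X := by
      rw [Matrix.conjTranspose_sub, Matrix.conjTranspose_smul, Matrix.conjTranspose_one, hcr]
      simp only [Matrix.sub_mul, Matrix.mul_sub, Matrix.smul_mul, Matrix.mul_smul, one_mul,
        mul_one, smul_smul]
      module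
    rw [expand, hXX] at hYY
    have h7 : c • (X + Xᴴ) = c • (c • (1 : Matrix (Fin n) (Fin n) ℂ)) := by
      rw [smul_smul]
      linear_combination (norm := module) (-1 : ℂ) • hYY
    exact smul_right_injective _ hc0 h7
  have hYX : Λᴴ * (T * (Λ * Tᴴ)) = Xᴴ :=
    (eq_sub_of_add_eq' h1').trans (eq_sub_of_add_eq' hXH).symm
  have hZX : Tᴴ * (Λ * (T * Λᴴ)) = X :=
    (eq_sub_of_add_eq' h2').trans (eq_sub_of_add_eq hXH).symm
  -- X commutes with T
  have hcommT : X * T = T * X := by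
    have hl : X * T = Λ * (T * Λᴴ) := by
      rw [hXdef]
      simp only [mul_assoc, hT2, mul_one]
    have hr : T * X = Λ * (T * Λᴴ) := by
      rw [← hZX, ← mul_assoc, hT1, one_mul]
    rw [hl, hr]
  -- X commutes with Λ
  have hcommΛ : X * Λ = Λ * X := by
    have hXHform : Xᴴ = (T * (Λ * Tᴴ)) * Λᴴ := by
      rw [hXdef]
      simp [Matrix.conjTranspose_mul, mul_assoc]
    have h_a : Λᴴ * (T * (Λ * Tᴴ)) = (T * (Λ * Tᴴ)) * Λᴴ := by rw [hYX, hXHform]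
    have h_c : (T * (Λ * Tᴴ))ᴴ * Λ = Λ * (T * (Λ * Tᴴ))ᴴ := by
      have := congrArg Matrix.conjTranspose h_a
      simpa only [Matrix.conjTranspose_mul, Matrix.conjTranspose_conjTranspose] using this
    have hWH : (T * (Λ * Tᴴ))ᴴ = T * (Λᴴ * Tᴴ) := by
      simp [Matrix.conjTranspose_mul, mul_assoc]
    rw [hWH] at h_c
    calc X * Λ = Λ * (T * (Λᴴ * Tᴴ) * Λ) := by rw [hXdef, mul_assoc]
      _ = Λ * (Λ * (T * (Λᴴ * Tᴴ))) := by rw [h_c]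
      _ = Λ * X := by rw [hXdef]
  -- Schur: X is scalar
  obtain ⟨ω, hXω⟩ := schur_aux hn Λ T X hirr hcommΛ hcommT
  have entry_eq : ∀ a b : ℂ, a • (1 : Matrix (Fin n) (Fin n) ℂ) = b • 1 → a = b := by
    intro a b hab
    have h3 : (a • (1 : Matrix (Fin n) (Fin n) ℂ)) z0 z0 = (b • (1 : Matrix (Fin n) (Fin n) ℂ)) z0 z0 := by
      rw [hab]
    simpa [Matrix.smul_apply, Matrix.one_apply_eq] using h3
  have hωu : (starRingEnd ℂ) ω * ω = 1 := by
    have h4 := hXX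
    rw [hXω, Matrix.conjTranspose_smul, Matrix.conjTranspose_one, Matrix.smul_mul,
      Matrix.mul_smul, one_mul, smul_smul] at h4
    have h5 : ((starRingEnd ℂ) ω * ω) • (1 : Matrix (Fin n) (Fin n) ℂ) = (1 : ℂ) • 1 := by
      rw [one_smul]
      simpa [Complex.star_def] using h4
    exact entry_eq _ _ h5
  have hω0 : ω ≠ 0 := by
    rintro rfl
    simp at hωu
  have hc : ω + (starRingEnd ℂ) ω = c := by
    have h4 := hXH
    rw [hXω, Matrix.conjTranspose_smul, Matrix.conjTranspose_one, ← add_smul] at h4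
    exact entry_eq _ _ h4
  -- the commutation relation Λ T = ω T Λ
  have hcommΛT : Λ * T = ω • (T * Λ) := by
    have h4 := congrArg (fun M => M * (T * Λ)) hXω
    simp only [Matrix.smul_mul, one_mul] at h4
    rw [hXdef] at h4
    simp only [mul_assoc, e4, hΛ2, mul_one] at h4
    simpa only [mul_assoc] using h4
  -- ω is an n-th root of unity
  have hωn : ω ^ n = 1 := by
    have hdet := congrArg Matrix.det hcommΛT
    rw [Matrix.det_smul, Matrix.det_mul, Matrix.det_mul, Fintype.card_fin] at hdet
    have hdΛ : Λ.det ≠ 0 := by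
      have := congrArg Matrix.det hΛ1
      rw [Matrix.det_mul, Matrix.det_one] at this
      exact left_ne_zero_of_mul_eq_one this
    have hdT : T.det ≠ 0 := by
      have := congrArg Matrix.det hT1
      rw [Matrix.det_mul, Matrix.det_one] at this
      exact left_ne_zero_of_mul_eq_one this
    have h9 : (Λ.det * T.det) * ω ^ n = (Λ.det * T.det) * 1 := by
      linear_combination -hdet
    exact mul_left_cancel₀ (mul_ne_zero hdΛ hdT) h9
  -- eigenvector of Λ, normalized
  obtain ⟨lam, hlam⟩ := Module.End.exists_eigenvalue Λ.mulVecLin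
  obtain ⟨v0, hv0⟩ := hlam.exists_hasEigenvector
  have hv0e : Λ.mulVec v0 = lam • v0 := hv0.apply_eq_smul
  have hv00 : v0 ≠ 0 := hv0.2
  set r : ℝ := ∑ i, Complex.normSq (v0 i) with hrdef
  have hvr : star v0 ⬝ᵥ v0 = (r : ℂ) := by
    rw [hrdef]
    push_cast
    simp [dotProduct, Complex.normSq_eq_conj_mul_self]
  have hrne : r ≠ 0 := by
    intro h
    apply hv00
    funext i
    have hi := (Finset.sum_eq_zero_iff_of_nonneg
      (fun i _ => Complex.normSq_nonneg (v0 i))).mp (hrdef ▸ h) i (Finset.mem_univ i)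
    simpa using Complex.normSq_eq_zero.mp hi
  have hrpos : 0 < r := lt_of_le_of_ne (Finset.sum_nonneg fun i _ => Complex.normSq_nonneg _) (Ne.symm hrne)
  set s : ℝ := Real.sqrt r with hsdef
  have hs0 : s ≠ 0 := Real.sqrt_ne_zero'.mpr hrpos
  have hs2 : s * s = r := Real.mul_self_sqrt hrpos.le
  set v : Fin n → ℂ := ((s⁻¹ : ℝ) : ℂ) • v0 with hvdef
  have hv0' : v ≠ 0 := smul_ne_zero (by
    simp only [ne_eq, Complex.ofReal_eq_zero, inv_eq_zero]
    exact hs0) hv00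
  have hvn : star v ⬝ᵥ v = 1 := by
    rw [hvdef, star_smul, smul_dotProduct, dotProduct_smul, hvr, smul_eq_mul,
      smul_eq_mul, Complex.star_def, Complex.conj_ofReal]
    rw [show (((s⁻¹ : ℝ) : ℂ) * (((s⁻¹ : ℝ) : ℂ) * (r : ℂ))) = (((s⁻¹ * s⁻¹ * r : ℝ)) : ℂ) by push_cast; ring]
    rw [show s⁻¹ * s⁻¹ * r = 1 from by field_simp [hs0]; linarith [hs2]]
    norm_num
  have hve : Λ.mulVec v = lam • v := by
    rw [hvdef, Matrix.mulVec_smul, hv0e, smul_comm]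
  have hlamu : (starRingEnd ℂ) lam * lam = 1 := by
    have h4 := ip_pres Λ hΛ2 v v
    rw [hve, hvn, star_smul, smul_dotProduct, dotProduct_smul, hvn,
      smul_eq_mul, smul_eq_mul, Complex.star_def, mul_one] at h4
    exact h4
  -- primitivity of ω
  have hprim : ∀ m : ℕ, 0 < m → m < n → ω ^ m ≠ 1 := by
    intro m hm0 hmn hω1
    have hcΛ : Λ * T ^ m = T ^ m * Λ := by
      have h4 := comm_pow Λ T ω hcommΛT m
      rwa [hω1, one_smul] at h4
    obtain ⟨b, hb⟩ := schur_aux hn Λ T (T ^ m) hirr hcΛ.symm (by rw [← pow_succ, ← pow_succ'])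
    set em : Fin m → (Fin n → ℂ) := fun k => (T ^ (k : ℕ)).mulVec v with hem
    set S : Set (Fin n → ℂ) := Set.range em with hS
    have hv_mem : v ∈ Submodule.span ℂ S := by
      refine Submodule.subset_span ⟨⟨0, hm0⟩, ?_⟩
      rw [hem]
      simp [Matrix.one_mulVec]
    have hΛS : ∀ x ∈ S, Λ.mulVec x ∈ Submodule.span ℂ S := by
      rintro x ⟨k, rfl⟩
      rw [hem]
      simp only []
      rw [Matrix.mulVec_mulVec, comm_pow Λ T ω hcommΛT, Matrix.smul_mulVec,
        ← Matrix.mulVec_mulVec, hve, Matrix.mulVec_smul]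
      exact Submodule.smul_mem _ _ (Submodule.smul_mem _ _ (Submodule.subset_span ⟨k, rfl⟩))
    have hTS : ∀ x ∈ S, T.mulVec x ∈ Submodule.span ℂ S := by
      rintro x ⟨k, rfl⟩
      rw [hem]
      simp only []
      rw [Matrix.mulVec_mulVec, ← pow_succ']
      by_cases hk : (k : ℕ) + 1 < m
      · exact Submodule.subset_span ⟨⟨(k : ℕ) + 1, hk⟩, rfl⟩
      · have hkm : (k : ℕ) + 1 = m := by
          have := k.isLt
          omega
        rw [hkm, hb, Matrix.smul_mulVec, Matrix.one_mulVec]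
        exact Submodule.smul_mem _ _ hv_mem
    rcases hirr _ (span_invariant Λ S hΛS) (span_invariant T S hTS) with hbot | htop
    · rw [hbot] at hv_mem
      exact hv0' (by simpa using hv_mem)
    · exact absurd (span_top_le em htop) (by omega)
  -- T ^ n is scalar
  have hTncomm : Λ * T ^ n = T ^ n * Λ := by
    have h4 := comm_pow Λ T ω hcommΛT n
    rwa [hωn, one_smul] at h4
  obtain ⟨β, hβ⟩ := schur_aux hn Λ T (T ^ n) hirr hTncomm.symm (by rw [← pow_succ, ← pow_succ'])
  have hβu : (starRingEnd ℂ) β * β = 1 := by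
    have h4 := pow_unit T hT2 n
    rw [hβ, Matrix.conjTranspose_smul, Matrix.conjTranspose_one, Matrix.smul_mul,
      Matrix.mul_smul, one_mul, smul_smul] at h4
    have h5 : ((starRingEnd ℂ) β * β) • (1 : Matrix (Fin n) (Fin n) ℂ) = (1 : ℂ) • 1 := by
      rw [one_smul]
      simpa [Complex.star_def] using h4
    exact entry_eq _ _ h5
  -- apply the construction
  obtain ⟨θ, θ', U, hU1, hU2, hU3⟩ :=
    construction hn Λ T hΛ2 hT2 ω hωu hcommΛT hprim lam hlamu v hvn hve β hβu hβ
  have hqω : ω⁻¹ = (starRingEnd ℂ) ω := (eq_inv_of_mul_eq_one_left hωu).symm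
  refine ⟨ω⁻¹, by rw [inv_pow, hωn, inv_one], ⟨θ, θ', U, hU1, hU2, hU3⟩, ?_, ?_⟩
  · -- μ = |1 - ω⁻¹|²
    have hq : (1 - ω⁻¹) * (starRingEnd ℂ) (1 - ω⁻¹) = (μ : ℂ) := by
      rw [hqω, map_sub, map_one, Complex.conj_conj]
      have hexp : (1 - (starRingEnd ℂ) ω) * (1 - ω)
          = 1 - (ω + (starRingEnd ℂ) ω) + (starRingEnd ℂ) ω * ω := by ring
      rw [hexp, hωu, hc, hcdef]
      ring
    have h4 : ((‖1 - ω⁻¹‖ ^ 2 : ℝ) : ℂ) = (μ : ℂ) := by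
      rw [← hq, Complex.sq_norm, Complex.normSq_eq_conj_mul_self]
      ring
    exact_mod_cast h4.symm
  · -- the angle β
    have hqu : (starRingEnd ℂ) (ω⁻¹) * ω⁻¹ = 1 := by
      rw [hqω, Complex.conj_conj, mul_comm]
      exact hωu
    obtain ⟨φ, hφ⟩ := exp_form hqu
    refine ⟨φ / 2, ?_, ?_, ?_⟩
    · -- μ = 4 sin²(φ/2)
      have hsum : ω⁻¹ + (starRingEnd ℂ) (ω⁻¹) = ((2 * Real.cos φ : ℝ) : ℂ) := by
        rw [← hφ, ← Complex.exp_conj, map_mul, Complex.conj_ofReal, Complex.conj_I]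
        rw [show ((φ : ℂ) * -Complex.I) = ((-φ : ℂ) * Complex.I) from by ring]
        rw [Complex.exp_mul_I, Complex.exp_mul_I, Complex.cos_neg, Complex.sin_neg,
          ← Complex.ofReal_cos, ← Complex.ofReal_sin]
        push_cast
        ring
      have hsum2 : ω⁻¹ + (starRingEnd ℂ) (ω⁻¹) = (2 : ℂ) - μ := by
        rw [hqω, Complex.conj_conj, add_comm, hc, hcdef]
      have h5 : ((2 * Real.cos φ : ℝ) : ℂ) = ((2 - μ : ℝ) : ℂ) := by
        rw [← hsum, hsum2]
        push_cast
        ring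
      have h6 : 2 * Real.cos φ = 2 - μ := by exact_mod_cast h5
      have h7 := Real.cos_two_mul' (φ / 2)
      rw [show 2 * (φ / 2) = φ from by ring] at h7
      have h8 := Real.sin_sq_add_cos_sq (φ / 2)
      nlinarith
    · rw [← hφ]
      congr 1
      push_cast
      ring
    · rw [show (2 * (n : ℂ) * ((φ / 2 : ℝ) : ℂ) * Complex.I) = (n : ℕ) * ((φ : ℂ) * Complex.I) from by
        push_cast; ring]
      rw [Complex.exp_nat_mul, hφ, inv_pow, hωn, inv_one]
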